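/- arXiv:1709.08529 — 5 statements merged into one kernel-verified Lean document; each statement's English description precedes it below -/
import Mathlib

section
/- Let A be a unital C*-algebra, e ∈ A a partial isometry, x ∈ A₂(e) an element of the Peirce-2 subspace with ‖x‖ ≤ 1, and y ∈ A₀(e) an element of the Peirce-0 subspace with ‖y‖ ≤ 1. Then ‖x + y‖ = max(‖x‖, ‖y‖) ≤ 1. -/
private lemma pow_mul_eq_zero_aux {A : Type*} [CStarAlgebra A] {u v : A}
    (huv : u * v = 0) : ∀ n : ℕ, u ^ (n + 1) * v = 0 := by
  intro n
  induction n with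
  | zero => simpa using huv
  | succ n ih =>
    rw [pow_succ, mul_assoc, huv, mul_zero]

private lemma add_pow_eq {A : Type*} [CStarAlgebra A] {u v : A}
    (huv : u * v = 0) (hvu : v * u = 0) :
    ∀ n : ℕ, (u + v) ^ (n + 1) = u ^ (n + 1) + v ^ (n + 1) := by
  intro n
  induction n with
  | zero => simp
  | succ n ih =>
    rw [pow_succ, ih, add_mul, mul_add, mul_add, pow_mul_eq_zero_aux huv,
      pow_mul_eq_zero_aux hvu, ← pow_succ, ← pow_succ]
    abel

/-- Orthogonal positive elements: norm of the sum is the max of the norms. -/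
private lemma norm_add_of_orthogonal {A : Type*} [CStarAlgebra A]
    [PartialOrder A] [StarOrderedRing A] {u v : A}
    (hu : 0 ≤ u) (hv : 0 ≤ v) (huv : u * v = 0) : ‖u + v‖ = max ‖u‖ ‖v‖ := by
  have hvu : v * u = 0 := by
    have h := congrArg star huv
    rwa [star_mul, hu.isSelfAdjoint.star_eq, hv.isSelfAdjoint.star_eq, star_zero] at h
  refine le_antisymm ?_ (max_le
    (CStarAlgebra.norm_le_norm_of_nonneg_of_le hu (le_add_of_nonneg_right hv))
    (CStarAlgebra.norm_le_norm_of_nonneg_of_le hv (le_add_of_nonneg_left hu)))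
  set M : ℝ := max ‖u‖ ‖v‖ with hM
  have hM0 : 0 ≤ M := le_trans (norm_nonneg u) (le_max_left _ _)
  have hsa : IsSelfAdjoint (u + v) := hu.isSelfAdjoint.add hv.isSelfAdjoint
  have key : ∀ n : ℕ, ‖u + v‖ ^ (2 ^ n) ≤ 2 * M ^ (2 ^ n) := by
    intro n
    have hpos : 0 < 2 ^ n := pow_pos (by norm_num) n
    have h1 : ‖(u + v) ^ (2 ^ n)‖ = ‖u + v‖ ^ (2 ^ n) := by
      have h := congrArg ((↑) : NNReal → ℝ) (hsa.nnnorm_pow_two_pow n)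
      simpa [NNReal.coe_pow] using h
    obtain ⟨m, hm⟩ : ∃ m : ℕ, 2 ^ n = m + 1 :=
      ⟨2 ^ n - 1, (Nat.succ_pred_eq_of_pos hpos).symm⟩
    calc ‖u + v‖ ^ (2 ^ n) = ‖(u + v) ^ (2 ^ n)‖ := h1.symm
      _ = ‖u ^ (2 ^ n) + v ^ (2 ^ n)‖ := by rw [hm, add_pow_eq huv hvu]
      _ ≤ ‖u ^ (2 ^ n)‖ + ‖v ^ (2 ^ n)‖ := norm_add_le _ _
      _ ≤ ‖u‖ ^ (2 ^ n) + ‖v‖ ^ (2 ^ n) := by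
          gcongr <;> exact norm_pow_le' _ hpos
      _ ≤ M ^ (2 ^ n) + M ^ (2 ^ n) :=
          add_le_add (pow_le_pow_left₀ (norm_nonneg u) (le_max_left _ _) _)
            (pow_le_pow_left₀ (norm_nonneg v) (le_max_right _ _) _)
      _ = 2 * M ^ (2 ^ n) := by ring
  by_contra h
  push_neg at h
  rcases eq_or_lt_of_le hM0 with hM0' | hM0'
  · have h0 := key 0
    simp at h0
    have h' : M = 0 := hM0'.symm
    rw [h'] at h h0
    linarith
  · set r := ‖u + v‖ / M with hr
    have hr1 : 1 < r := (one_lt_div hM0').mpr h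
    obtain ⟨n, hn⟩ := pow_unbounded_of_one_lt (2 : ℝ) hr1
    have hle : r ^ n ≤ r ^ (2 ^ n) :=
      pow_le_pow_right₀ hr1.le (Nat.le_of_lt (Nat.lt_two_pow_self (n := n)))
    have h2 : r ^ (2 ^ n) ≤ 2 := by
      have hk := key n
      rw [hr, div_pow, div_le_iff₀ (pow_pos hM0' _)]
      linarith
    linarith [hn.trans_le hle]

/-- For a partial isometry `e` in a unital C*-algebra, if `x` belongs to the Peirce-2
subspace and `y` to the Peirce-0 subspace, both of norm at most one, then
`‖x + y‖ = max ‖x‖ ‖y‖ ≤ 1`. -/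
theorem norm_add_peirce2_peirce0 {A : Type*} [CStarAlgebra A]
    (e : A) (he : e * star e * e = e) (x y : A)
    (hx : ∃ a : A, x = e * star e * a * (star e * e))
    (hy : ∃ b : A, y = (1 - e * star e) * b * (1 - star e * e))
    (hxn : ‖x‖ ≤ 1) (hyn : ‖y‖ ≤ 1) :
    ‖x + y‖ = max ‖x‖ ‖y‖ ∧ ‖x + y‖ ≤ 1 := by
  letI : PartialOrder A := CStarAlgebra.spectralOrder A
  haveI : StarOrderedRing A := CStarAlgebra.spectralOrderedRing A
  obtain ⟨a, hxdef⟩ := hx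
  obtain ⟨b, hydef⟩ := hy
  obtain ⟨p, hp⟩ : ∃ p, p = e * star e := ⟨_, rfl⟩
  obtain ⟨q, hq⟩ : ∃ q, q = star e * e := ⟨_, rfl⟩
  have he' : star e * e * star e = star e := by
    have := congrArg star he
    simpa [star_mul, mul_assoc] using this
  have hxdef' : x = p * a * q := by rw [hp, hq, hxdef]
  have hydef' : y = (1 - p) * b * (1 - q) := by rw [hp, hq, hydef]
  have hp2 : p * p = p := by
    rw [hp]
    calc (e * star e) * (e * star e) = (e * star e * e) * star e := by noncomm_ring
      _ = e * star e := by rw [he]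
  have hq2 : q * q = q := by
    rw [hq]
    calc (star e * e) * (star e * e) = (star e * e * star e) * e := by noncomm_ring
      _ = star e * e := by rw [he']
  have hpsa : star p = p := by rw [hp]; simp [star_mul]
  have hqsa : star q = q := by rw [hq]; simp [star_mul]
  have hp0 : p * (1 - p) = 0 := by rw [mul_sub, hp2, mul_one, sub_self]
  have hq0 : q * (1 - q) = 0 := by rw [mul_sub, hq2, mul_one, sub_self]
  have hp0' : (1 - p) * p = 0 := by rw [sub_mul, hp2, one_mul, sub_self]
  have hsx : star x = q * star a * p := by
    rw [hxdef']; simp only [star_mul, hpsa, hqsa]; noncomm_ring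
  have hsy : star y = (1 - q) * star b * (1 - p) := by
    have h1 : star (1 - p) = 1 - p := by rw [star_sub, star_one, hpsa]
    have h2 : star (1 - q) = 1 - q := by rw [star_sub, star_one, hqsa]
    rw [hydef']; simp only [star_mul, h1, h2]; noncomm_ring
  have hxy : star x * y = 0 := by
    have h : star x * y = q * star a * (p * (1 - p)) * (b * (1 - q)) := by
      rw [hsx, hydef']; noncomm_ring
    rw [h, hp0, mul_zero, zero_mul]
  have hyx : star y * x = 0 := by
    have h : star y * x = (1 - q) * star b * ((1 - p) * p) * (a * q) := by
      rw [hsy, hxdef']; noncomm_ring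
    rw [h, hp0', mul_zero, zero_mul]
  have hxy' : x * star y = 0 := by
    have h : x * star y = p * a * (q * (1 - q)) * (star b * (1 - p)) := by
      rw [hxdef', hsy]; noncomm_ring
    rw [h, hq0, mul_zero, zero_mul]
  have hexp : star (x + y) * (x + y) = star x * x + star y * y := by
    rw [star_add, add_mul, mul_add, mul_add, hxy, hyx]
    abel
  have huv : (star x * x) * (star y * y) = 0 := by
    calc (star x * x) * (star y * y) = star x * (x * star y) * y := by noncomm_ring
      _ = 0 := by rw [hxy', mul_zero, zero_mul]
  have hkey : ‖x + y‖ * ‖x + y‖ = max (‖x‖ * ‖x‖) (‖y‖ * ‖y‖) := by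
    calc ‖x + y‖ * ‖x + y‖ = ‖star (x + y) * (x + y)‖ :=
          (CStarRing.norm_star_mul_self).symm
      _ = ‖star x * x + star y * y‖ := by rw [hexp]
      _ = max ‖star x * x‖ ‖star y * y‖ :=
          norm_add_of_orthogonal (star_mul_self_nonneg x) (star_mul_self_nonneg y) huv
      _ = max (‖x‖ * ‖x‖) (‖y‖ * ‖y‖) := by rw [CStarRing.norm_star_mul_self,
          CStarRing.norm_star_mul_self]
  have hmax : max (‖x‖ * ‖x‖) (‖y‖ * ‖y‖) = max ‖x‖ ‖y‖ * max ‖x‖ ‖y‖ := by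
    rcases le_total ‖x‖ ‖y‖ with hle | hle
    · rw [max_eq_right hle, max_eq_right (mul_le_mul hle hle (norm_nonneg x) (norm_nonneg y))]
    · rw [max_eq_left hle, max_eq_left (mul_le_mul hle hle (norm_nonneg y) (norm_nonneg x))]
  have heq : ‖x + y‖ = max ‖x‖ ‖y‖ := by
    have h := hkey.trans hmax
    have h1 : 0 ≤ ‖x + y‖ := norm_nonneg _
    have h2 : 0 ≤ max ‖x‖ ‖y‖ := le_trans (norm_nonneg x) (le_max_left _ _)
    nlinarith
  exact ⟨heq, heq ▸ max_le hxn hyn⟩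
end

section
/- Let M be a von Neumann algebra (or more generally a unital C*-algebra), and let e be a partial isometry in M. An element x ∈ B_M (the closed unit ball) satisfies x e* = e e* if and only if x = e + (1 − e e*) x (1 − e* e). Consequently the set F_e = {x ∈ B_M : x e* = e e*} equals e + (1 − e e*) B_M (1 − e* e). -/
section Aux

variable {M : Type*} [CStarAlgebra M]

/-- The hard direction: if `‖x‖ ≤ 1` and `x e* = e e*` then `e e* x = e`. -/
lemma aux_p_mul {e x : M} (he : e * star e * e = e) (hx : ‖x‖ ≤ 1)
    (hxe : x * star e = e * star e) : e * star e * x = e := by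
  letI := CStarAlgebra.spectralOrder M
  letI := CStarAlgebra.spectralOrderedRing M
  have hstar : star e * e * star e = star e := by
    simpa [star_mul, mul_assoc] using congrArg star he
  have hps : star (e * star e) = e * star e := by simp [star_mul]
  have hqs : star (1 - star e * e : M) = 1 - star e * e := by simp [star_mul]
  have hpp : (e * star e) * (e * star e) = e * star e := by
    rw [← mul_assoc, he]
  have hqq : (star e * e) * (star e * e) = star e * e := by
    rw [← mul_assoc, hstar]
  have hqq1 : (1 - star e * e : M) * (1 - star e * e) = 1 - star e * e := by
    simp only [mul_sub, sub_mul, one_mul, mul_one, hqq]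
    abel
  have hq1nn : (0 : M) ≤ 1 - star e * e := by
    calc (0 : M) ≤ star (1 - star e * e) * (1 - star e * e) := star_mul_self_nonneg _
      _ = 1 - star e * e := by rw [hqs, hqq1]
  set y : M := e * star e * x with hy
  have hys : star y = star x * (e * star e) := by
    rw [hy, star_mul, hps]
  have hyq : y * (star e * e) = e := by
    calc y * (star e * e) = e * star e * (x * star e * e) := by rw [hy]; noncomm_ring
      _ = e * star e * (e * star e * e) := by rw [hxe]
      _ = e := by rw [he, he]
  have hex : e * star x = e * star e := by
    have := congrArg star hxe
    simpa [star_mul, star_star, hps] using this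
  have h1 : y * (star e * e) * star y = e * star e := by
    rw [hyq, hys, ← mul_assoc, hex, hpp]
  have hxx : x * star x ≤ 1 := by
    rw [← CStarAlgebra.norm_le_one_iff_of_nonneg _ (mul_star_self_nonneg x),
      CStarRing.norm_self_mul_star]
    nlinarith [norm_nonneg x]
  have h2 : y * star y ≤ e * star e := by
    have hc := star_right_conjugate_le_conjugate hxx (e * star e)
    rw [hps, mul_one, hpp] at hc
    calc y * star y = e * star e * (x * star x) * (e * star e) := by
          rw [hy, hys]; noncomm_ring
      _ ≤ e * star e := hc
  have h3 : y * (1 - star e * e) * star y = 0 := by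
    have hge : 0 ≤ y * (1 - star e * e) * star y := by
      simpa using star_right_conjugate_le_conjugate hq1nn y
    have hle : y * (1 - star e * e) * star y ≤ 0 := by
      have hexpand : y * (1 - star e * e) * star y
          = y * star y - y * (star e * e) * star y := by noncomm_ring
      rw [hexpand, h1]
      exact sub_nonpos.mpr h2
    exact le_antisymm hle hge
  have h4 : y * (1 - star e * e) = 0 := by
    have key : (y * (1 - star e * e)) * star (y * (1 - star e * e)) = 0 := by
      calc (y * (1 - star e * e)) * star (y * (1 - star e * e))
          = y * (1 - star e * e) * ((1 - star e * e) * star y) := by rw [star_mul, hqs]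
        _ = y * ((1 - star e * e) * (1 - star e * e)) * star y := by noncomm_ring
        _ = y * (1 - star e * e) * star y := by rw [hqq1]
        _ = 0 := h3
    exact (CStarRing.mul_star_self_eq_zero_iff _).mp key
  have h5 : y = y * (star e * e) := by
    have : y - y * (star e * e) = 0 := by
      simpa [mul_sub, mul_one] using h4
    exact (sub_eq_zero.mp this)
  rw [h5, hyq]

/-- Norm bound for the translated element. -/
lemma aux_norm {e x : M} (he : e * star e * e = e) (hx : ‖x‖ ≤ 1) :
    ‖e + (1 - e * star e) * x * (1 - star e * e)‖ ≤ 1 := by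
  letI := CStarAlgebra.spectralOrder M
  letI := CStarAlgebra.spectralOrderedRing M
  have hstar : star e * e * star e = star e := by
    simpa [star_mul, mul_assoc] using congrArg star he
  have hps : star (1 - e * star e : M) = 1 - e * star e := by simp [star_mul]
  have hqs : star (1 - star e * e : M) = 1 - star e * e := by simp [star_mul]
  have hpp1 : (1 - e * star e : M) * (1 - e * star e) = 1 - e * star e := by
    have hpp : (e * star e) * (e * star e) = e * star e := by rw [← mul_assoc, he]
    simp only [mul_sub, sub_mul, one_mul, mul_one, hpp]
    abel
  have hqq1 : (1 - star e * e : M) * (1 - star e * e) = 1 - star e * e := by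
    have hqq : (star e * e) * (star e * e) = star e * e := by rw [← mul_assoc, hstar]
    simp only [mul_sub, sub_mul, one_mul, mul_one, hqq]
    abel
  set z : M := (1 - e * star e) * x * (1 - star e * e) with hz
  have hqe : (1 - star e * e : M) * star e = 0 := by
    rw [sub_mul, one_mul, mul_assoc, ← mul_assoc (star e), hstar]
    simp
  have hze : z * star e = 0 := by
    rw [hz, mul_assoc, hqe, mul_zero]
  have hez : e * star z = 0 := by
    have := congrArg star hze
    simpa [star_mul, star_star] using this
  have hzs : star z = (1 - star e * e) * (star x * (1 - e * star e)) := by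
    rw [hz, star_mul, star_mul, hps, hqs]
  have hxx : x * star x ≤ 1 := by
    rw [← CStarAlgebra.norm_le_one_iff_of_nonneg _ (mul_star_self_nonneg x),
      CStarRing.norm_self_mul_star]
    nlinarith [norm_nonneg x]
  have hq1le : (1 - star e * e : M) ≤ 1 :=
    sub_le_self 1 (star_mul_self_nonneg e)
  have step1 : x * (1 - star e * e) * star x ≤ 1 := by
    have h := star_right_conjugate_le_conjugate hq1le x
    rw [mul_one] at h
    exact h.trans hxx
  have hzz : z * star z ≤ 1 - e * star e := by
    have hform : z * star z
        = (1 - e * star e) * (x * (1 - star e * e) * star x) * (1 - e * star e) := by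
      rw [hz, hzs]
      calc (1 - e * star e) * x * (1 - star e * e)
              * ((1 - star e * e) * (star x * (1 - e * star e)))
          = (1 - e * star e) * (x * ((1 - star e * e) * (1 - star e * e)) * star x)
              * (1 - e * star e) := by noncomm_ring
        _ = _ := by rw [hqq1]
    rw [hform]
    have h := star_right_conjugate_le_conjugate step1 (1 - e * star e)
    rw [hps, mul_one, hpp1] at h
    exact h
  have hkey : (e + z) * star (e + z) ≤ 1 := by
    have hexp : (e + z) * star (e + z)
        = e * star e + e * star z + (z * star e + z * star z) := by
      rw [star_add]; noncomm_ring
    rw [hexp, hez, hze, add_zero, zero_add]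
    calc e * star e + z * star z ≤ e * star e + (1 - e * star e) :=
          add_le_add_right hzz _
      _ = 1 := by abel
  have := (CStarAlgebra.norm_le_one_iff_of_nonneg _ (mul_star_self_nonneg (e + z))).mpr hkey
  rw [CStarRing.norm_self_mul_star] at this
  nlinarith [norm_nonneg (e + z)]

/-- `(e + (1-p) x (1-q)) e* = e e*`. -/
lemma aux_easy {e : M} (he : e * star e * e = e) (x : M) :
    (e + (1 - e * star e) * x * (1 - star e * e)) * star e = e * star e := by
  have hstar : star e * e * star e = star e := by
    simpa [star_mul, mul_assoc] using congrArg star he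
  have hqe : (1 - star e * e : M) * star e = 0 := by
    rw [sub_mul, one_mul, mul_assoc, ← mul_assoc (star e), hstar]
    simp
  calc (e + (1 - e * star e) * x * (1 - star e * e)) * star e
      = e * star e + (1 - e * star e) * x * ((1 - star e * e) * star e) := by noncomm_ring
    _ = e * star e := by rw [hqe]; simp

end Aux

/-- For a partial isometry `e` in a unital C*-algebra and `x` in the closed unit ball,
`x e* = e e*` iff `x = e + (1 - e e*) x (1 - e* e)`; consequently the face
`F_e = {x ∈ B_M : x e* = e e*}` equals `e + (1 - e e*) B_M (1 - e* e)`. -/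
theorem face_eq_translate {M : Type*} [CStarAlgebra M]
    (e : M) (he : e * star e * e = e) :
    (∀ x : M, ‖x‖ ≤ 1 →
      (x * star e = e * star e ↔ x = e + (1 - e * star e) * x * (1 - star e * e))) ∧
    {x : M | ‖x‖ ≤ 1 ∧ x * star e = e * star e} =
      {y : M | ∃ x : M, ‖x‖ ≤ 1 ∧ y = e + (1 - e * star e) * x * (1 - star e * e)} := by
  have hard : ∀ x : M, ‖x‖ ≤ 1 → x * star e = e * star e →
      x = e + (1 - e * star e) * x * (1 - star e * e) := by
    intro x hx hxe
    have hpx : e * star e * x = e := aux_p_mul he hx hxe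
    have hxq : x * (star e * e) = e := by
      rw [← mul_assoc, hxe, he]
    have hpxq : e * star e * x * (star e * e) = e := by
      rw [hpx, ← mul_assoc, he]
    calc x = e + (x - x * (star e * e) - e * star e * x
            + e * star e * x * (star e * e)) := by
          rw [hpxq, hxq, hpx]; abel
      _ = e + (1 - e * star e) * x * (1 - star e * e) := by noncomm_ring
  refine ⟨fun x hx => ⟨hard x hx, fun h => by rw [h]; exact aux_easy he x⟩, ?_⟩
  ext y
  simp only [Set.mem_setOf_eq]
  constructor
  · rintro ⟨hy1, hy2⟩
    exact ⟨y, hy1, hard y hy1 hy2⟩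
  · rintro ⟨x, hx, rfl⟩
    exact ⟨aux_norm he hx, aux_easy he x⟩
end

section
/- Let M be a unital C*-algebra and e ∈ M a partial isometry. Then the set F_e = {x ∈ B_M : x e* = e e*} is a (nonempty, convex) face of the closed unit ball B_M: if x, y ∈ B_M, 0 < t < 1, and t x + (1−t) y ∈ F_e, then x, y ∈ F_e. -/
section aux

variable {M : Type*} [CStarAlgebra M]

private lemma face_aux (e : M) (he : e * star e * e = e)
    {x : M} (hx : ‖x‖ ≤ 1) {w : M} (hw : ‖w‖ ≤ 1) {t : ℝ} (ht0 : 0 < t) (ht1 : t < 1)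
    (hcomb : t • (x * (star e * e)) + (1 - t) • (w * (star e * e)) = e) :
    x * star e = e * star e := by
  set q : M := star e * e with hq_def
  have hqse : q * star e = star e := by
    have h := congrArg star he
    simp only [star_mul, star_star] at h
    rw [hq_def, mul_assoc]
    exact h
  have hqsa : star q = q := by simp [hq_def, star_mul]
  have hq2 : q * q = q := by
    have : q * q = (q * star e) * e := by simp [hq_def, mul_assoc]
    rw [this, hqse]
  have hqe : e * q = e := by simpa [mul_assoc] using he
  have hnq : ‖q‖ ≤ 1 := by
    have h1 : ‖q‖ * ‖q‖ = ‖q‖ := by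
      have := CStarRing.norm_star_mul_self (x := q)
      rwa [hqsa, hq2, eq_comm] at this
    nlinarith [norm_nonneg q]
  have hne : ‖e‖ ≤ 1 := by
    have h1 : ‖e‖ * ‖e‖ = ‖q‖ := (CStarRing.norm_star_mul_self (x := e)).symm
    nlinarith [norm_nonneg e]
  have hnse : ‖star e‖ ≤ 1 := by rwa [norm_star]
  -- abbreviations
  set c : M := star e * (x * q) with hc_def
  set d : M := star e * (w * q) with hd_def
  have hxq_norm : ‖x * q‖ ≤ 1 := by
    calc ‖x * q‖ ≤ ‖x‖ * ‖q‖ := norm_mul_le _ _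
    _ ≤ 1 := by nlinarith [norm_nonneg x, norm_nonneg q]
  have hwq_norm : ‖w * q‖ ≤ 1 := by
    calc ‖w * q‖ ≤ ‖w‖ * ‖q‖ := norm_mul_le _ _
    _ ≤ 1 := by nlinarith [norm_nonneg w, norm_nonneg q]
  have hnc : ‖c‖ ≤ 1 := by
    calc ‖c‖ ≤ ‖star e‖ * ‖x * q‖ := norm_mul_le _ _
    _ ≤ 1 := by nlinarith [norm_nonneg (star e), norm_nonneg (x * q)]
  have hnd : ‖d‖ ≤ 1 := by
    calc ‖d‖ ≤ ‖star e‖ * ‖w * q‖ := norm_mul_le _ _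
    _ ≤ 1 := by nlinarith [norm_nonneg (star e), norm_nonneg (w * q)]
  have hcq : c * q = c := by rw [hc_def, mul_assoc, mul_assoc, hq2]
  have hdq : d * q = d := by rw [hd_def, mul_assoc, mul_assoc, hq2]
  have hqc : q * c = c := by rw [hc_def, ← mul_assoc, hqse]
  have hqd : q * d = d := by rw [hd_def, ← mul_assoc, hqse]
  have hqsc : q * star c = star c := by
    have h := congrArg star hcq
    rwa [star_mul, hqsa] at h
  have hscq : star c * q = star c := by
    have h := congrArg star hqc
    rwa [star_mul, hqsa] at h
  have hqsd : q * star d = star d := by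
    have h := congrArg star hdq
    rwa [star_mul, hqsa] at h
  have hsdq : star d * q = star d := by
    have h := congrArg star hqd
    rwa [star_mul, hqsa] at h
  -- the convex combination, hit with (star e * ·)
  have hcomb' : t • c + (1 - t) • d = q := by
    have h := congrArg (fun z => star e * z) hcomb
    simpa [mul_add, mul_smul_comm, hc_def, hd_def] using h
  -- order structure
  letI := CStarAlgebra.spectralOrder M
  haveI := CStarAlgebra.spectralOrderedRing M
  have smone : ∀ r s : ℝ, r ≤ s → (r • (1 : M)) ≤ s • (1 : M) := by
    intro r s hrs
    have h0 : (0 : M) ≤ (s - r) • (1 : M) := smul_nonneg (by linarith) zero_le_one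
    rw [sub_smul] at h0
    exact sub_nonneg.mp h0
  have key2 : ∀ z : M, IsSelfAdjoint z → z ≤ ‖z‖ • (1 : M) := by
    intro z hz
    have := hz.le_algebraMap_norm_self
    rwa [Algebra.algebraMap_eq_smul_one] at this
  -- self-adjoint parts
  have hsc_sa : IsSelfAdjoint (c + star c) := by
    rw [IsSelfAdjoint, star_add, star_star, add_comm]
  have hsd_sa : IsSelfAdjoint (d + star d) := by
    rw [IsSelfAdjoint, star_add, star_star, add_comm]
  have hsc_le : c + star c ≤ (2 : ℝ) • (1 : M) := by
    refine le_trans (key2 _ hsc_sa) (smone _ _ ?_)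
    calc ‖c + star c‖ ≤ ‖c‖ + ‖star c‖ := norm_add_le _ _
    _ ≤ 2 := by rw [norm_star]; linarith
  have hsd_le : d + star d ≤ (2 : ℝ) • (1 : M) := by
    refine le_trans (key2 _ hsd_sa) (smone _ _ ?_)
    calc ‖d + star d‖ ≤ ‖d‖ + ‖star d‖ := norm_add_le _ _
    _ ≤ 2 := by rw [norm_star]; linarith
  -- conjugation by q
  have conj_id : ∀ (s : ℝ) (z : M), q * z = z → z * q = z →
      star q * (s • (1 : M) - z) * q = s • q - z := by
    intro s z h1 h2
    rw [hqsa, mul_sub, mul_smul_comm, mul_one, h1, sub_mul, smul_mul_assoc, hq2, h2]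
  have conj_id1 : ∀ z : M, q * z = z → z * q = z →
      star q * ((1 : M) - z) * q = q - z := by
    intro z h1 h2
    rw [hqsa, mul_sub, mul_one, h1, sub_mul, hq2, h2]
  have hconj : ∀ z : M, q * z = z → z * q = z → q * star z = star z → star z * q = star z →
      z + star z ≤ (2 : ℝ) • (1 : M) → 0 ≤ (2 : ℝ) • q - (z + star z) := by
    intro z h1 h2 h3 h4 h5
    have h0 : 0 ≤ star q * ((2 : ℝ) • (1 : M) - (z + star z)) * q :=
      star_left_conjugate_nonneg (sub_nonneg.mpr h5) q
    have hl : q * (z + star z) = z + star z := by rw [mul_add, h1, h3]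
    have hr : (z + star z) * q = z + star z := by rw [add_mul, h2, h4]
    rwa [conj_id 2 (z + star z) hl hr] at h0
  have hA : 0 ≤ (2 : ℝ) • q - (c + star c) := hconj c hqc hcq hqsc hscq hsc_le
  have hB : 0 ≤ (2 : ℝ) • q - (d + star d) := hconj d hqd hdq hqsd hsdq hsd_le
  have hstarcomb : t • star c + (1 - t) • star d = q := by
    have h := congrArg star hcomb'
    simpa [star_add, star_smul, hqsa] using h
  have hsum : t • ((2 : ℝ) • q - (c + star c)) + (1 - t) • ((2 : ℝ) • q - (d + star d)) = 0 := by
    have hrw : t • ((2 : ℝ) • q - (c + star c)) + (1 - t) • ((2 : ℝ) • q - (d + star d))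
        = (2 : ℝ) • q - ((t • c + (1 - t) • d) + (t • star c + (1 - t) • star d)) := by
      module
    rw [hrw, hcomb', hstarcomb]
    module
  have hA0 : (2 : ℝ) • q - (c + star c) = 0 := by
    have h1 : 0 ≤ t • ((2 : ℝ) • q - (c + star c)) := smul_nonneg ht0.le hA
    have h2 : 0 ≤ (1 - t) • ((2 : ℝ) • q - (d + star d)) := smul_nonneg (by linarith) hB
    have h3 : t • ((2 : ℝ) • q - (c + star c))
        = -((1 - t) • ((2 : ℝ) • q - (d + star d))) := eq_neg_of_add_eq_zero_left hsum
    have h4 : t • ((2 : ℝ) • q - (c + star c)) = 0 :=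
      le_antisymm (h3 ▸ neg_nonpos.mpr h2) h1
    exact (smul_eq_zero.mp h4).resolve_left (ne_of_gt ht0)
  have hstarc : star c = (2 : ℝ) • q - c := by
    linear_combination (norm := module) - hA0
  -- the skew part m := c - q vanishes
  set m : M := c - q with hm_def
  have hqm : q * m = m := by rw [hm_def, mul_sub, hqc, hq2]
  have hmq : m * q = m := by rw [hm_def, sub_mul, hcq, hq2]
  have hstarm : star m = -m := by
    rw [hm_def, star_sub, hstarc, hqsa]
    module
  have hscc : star c * c = q - m * m := by
    have h1 : star c = q - m := by rw [hstarc, hm_def]; module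
    have h2 : c = q + m := by rw [hm_def]; module
    rw [h1, h2, sub_mul, mul_add, mul_add, hq2, hqm, hmq]
    abel
  have hcc_le : star c * c ≤ (1 : M) := by
    have hn : ‖star c * c‖ ≤ 1 := by
      rw [CStarRing.norm_star_mul_self]
      nlinarith [norm_nonneg c]
    have := le_trans (key2 _ (IsSelfAdjoint.star_mul_self c)) (smone _ _ hn)
    rwa [one_smul] at this
  have hmm_nonneg : 0 ≤ m * m := by
    have h0 : 0 ≤ star q * ((1 : M) - star c * c) * q :=
      star_left_conjugate_nonneg (sub_nonneg.mpr hcc_le) q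
    have hl : q * (star c * c) = star c * c := by rw [← mul_assoc, hqsc]
    have hr : (star c * c) * q = star c * c := by rw [mul_assoc, hcq]
    rw [conj_id1 (star c * c) hl hr, hscc] at h0
    have heq : q - (q - m * m) = m * m := by abel
    rwa [heq] at h0
  have hm0 : m = 0 := by
    have h1 : 0 ≤ star m * m := star_mul_self_nonneg m
    rw [hstarm, neg_mul] at h1
    have h2 : m * m = 0 := le_antisymm (neg_nonneg.mp h1) hmm_nonneg
    have h3 : star m * m = 0 := by rw [hstarm, neg_mul, h2, neg_zero]
    exact (CStarRing.star_mul_self_eq_zero_iff m).mp h3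
  have hc_eq : c = q := by
    have := hm0
    rw [hm_def, sub_eq_zero] at this
    exact this
  -- now x * q = e
  have hpa : e * star e * (x * q) = e := by
    rw [mul_assoc, ← hc_def, hc_eq, hqe]
  set r : M := x * q - e with hr_def
  have hser : star e * r = 0 := by
    rw [hr_def, mul_sub, ← hc_def, hc_eq, hq_def, sub_self]
  have hsre : star r * e = 0 := by
    have h := congrArg star hser
    rwa [star_mul, star_star, star_zero] at h
  have hxqq : (x * q) * q = x * q := by rw [mul_assoc, hq2]
  have hrq : r * q = r := by rw [hr_def, sub_mul, hxqq, hqe]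
  have hqsr : q * star r = star r := by
    have h := congrArg star hrq
    rwa [star_mul, hqsa] at h
  have haa : star (x * q) * (x * q) = q + star r * r := by
    have h1 : x * q = e + r := by rw [hr_def]; module
    rw [h1, star_add, add_mul, mul_add, mul_add, hser, hsre, ← hq_def]
    abel
  have haa_le : star (x * q) * (x * q) ≤ (1 : M) := by
    have hn : ‖star (x * q) * (x * q)‖ ≤ 1 := by
      rw [CStarRing.norm_star_mul_self]
      nlinarith [norm_nonneg (x * q)]
    have := le_trans (key2 _ (IsSelfAdjoint.star_mul_self (x * q))) (smone _ _ hn)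
    rwa [one_smul] at this
  have hrr_nonpos : star r * r ≤ 0 := by
    have h0 : 0 ≤ star q * ((1 : M) - star (x * q) * (x * q)) * q :=
      star_left_conjugate_nonneg (sub_nonneg.mpr haa_le) q
    have hqsxq : q * star (x * q) = star (x * q) := by
      have h := congrArg star hxqq
      rwa [star_mul, hqsa] at h
    have hxqsq : (x * q) * q = x * q := hxqq
    have hl : q * (star (x * q) * (x * q)) = star (x * q) * (x * q) := by
      rw [← mul_assoc, hqsxq]
    have hr : (star (x * q) * (x * q)) * q = star (x * q) * (x * q) := by
      rw [mul_assoc, hxqsq]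
    rw [conj_id1 _ hl hr, haa] at h0
    have heq : q - (q + star r * r) = -(star r * r) := by abel
    rw [heq] at h0
    exact neg_nonneg.mp h0
  have hr0 : r = 0 :=
    (CStarRing.star_mul_self_eq_zero_iff r).mp
      (le_antisymm hrr_nonpos (star_mul_self_nonneg r))
  have hxq : x * q = e := by
    have := hr0
    rw [hr_def, sub_eq_zero] at this
    exact this
  conv_lhs => rw [← hqse]
  rw [← mul_assoc, hxq]

end aux

/-- For a partial isometry `e` in a unital C*-algebra, the set
`F_e = {x ∈ B_M : x e* = e e*}` is a nonempty convex face of the closed unit ball. -/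
theorem face_of_partial_isometry {M : Type*} [CStarAlgebra M]
    (e : M) (he : e * star e * e = e) :
    e ∈ {x : M | ‖x‖ ≤ 1 ∧ x * star e = e * star e} ∧
    Convex ℝ {x : M | ‖x‖ ≤ 1 ∧ x * star e = e * star e} ∧
    (∀ x y : M, ‖x‖ ≤ 1 → ‖y‖ ≤ 1 → ∀ t : ℝ, 0 < t → t < 1 →
      t • x + (1 - t) • y ∈ {x : M | ‖x‖ ≤ 1 ∧ x * star e = e * star e} →
      x ∈ {x : M | ‖x‖ ≤ 1 ∧ x * star e = e * star e} ∧
        y ∈ {x : M | ‖x‖ ≤ 1 ∧ x * star e = e * star e}) := by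
  have hqse : (star e * e) * star e = star e := by
    have h := congrArg star he
    simpa [star_mul, mul_assoc] using h
  have hq2 : (star e * e) * (star e * e) = star e * e := by
    have : (star e * e) * (star e * e) = ((star e * e) * star e) * e := by
      simp [mul_assoc]
    rw [this, hqse]
  have hnq : ‖star e * e‖ ≤ 1 := by
    have h1 : ‖star e * e‖ * ‖star e * e‖ = ‖star e * e‖ := by
      have h := CStarRing.norm_star_mul_self (x := star e * e)
      have hs : star (star e * e) = star e * e := by simp [star_mul]
      rw [hs, hq2] at h
      exact h.symm
    nlinarith [norm_nonneg (star e * e)]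
  have hne : ‖e‖ ≤ 1 := by
    have h1 : ‖e‖ * ‖e‖ = ‖star e * e‖ := (CStarRing.norm_star_mul_self (x := e)).symm
    nlinarith [norm_nonneg e]
  refine ⟨⟨hne, rfl⟩, ?_, ?_⟩
  · -- convexity
    rintro u ⟨hu1, hu2⟩ v ⟨hv1, hv2⟩ s r hs hr hsr
    constructor
    · calc ‖s • u + r • v‖ ≤ ‖s • u‖ + ‖r • v‖ := norm_add_le _ _
      _ = s * ‖u‖ + r * ‖v‖ := by
          rw [norm_smul, norm_smul, Real.norm_of_nonneg hs, Real.norm_of_nonneg hr]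
      _ ≤ s * 1 + r * 1 := by
          gcongr
      _ = 1 := by linarith
    · show (s • u + r • v) * star e = e * star e
      rw [add_mul, smul_mul_assoc, smul_mul_assoc, hu2, hv2, ← add_smul, hsr, one_smul]
  · -- face property
    rintro x y hx hy t ht0 ht1 ⟨_, hmem⟩
    have hcomb : t • (x * (star e * e)) + (1 - t) • (y * (star e * e)) = e := by
      have h := congrArg (fun z => z * e) hmem
      simp only [add_mul, smul_mul_assoc, mul_assoc] at h
      rw [← mul_assoc e (star e) e, he] at h
      exact h
    have hxmem : x * star e = e * star e := face_aux e he hx hy ht0 ht1 hcomb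
    have hcomb' : (1 - t) • (y * (star e * e)) + (1 - (1 - t)) • (x * (star e * e)) = e := by
      rw [sub_sub_cancel, add_comm]
      exact hcomb
    have hymem : y * star e = e * star e :=
      face_aux e he hy hx (by linarith) (by linarith) hcomb'
    exact ⟨⟨hx, hxmem⟩, ⟨hy, hymem⟩⟩
end

section
/- Let A be a unital C*-algebra and let v, u be partial isometries in A. Define v ≤ u if and only if u = v + (1 − v v*) u (1 − v* v). Then ≤ is a partial order on the set of partial isometries of A, and v ≤ u implies F_u ⊆ F_v, where F_w = {x ∈ B_A : x w* = w w*}. -/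
section aux
variable {A : Type*} [Ring A] [StarRing A]

private lemma pi_hsv {v : A} (hv : v * star v * v = v) :
    star v * (v * star v) = star v := by
  simpa [star_mul, mul_assoc] using congrArg star hv

private lemma pi_hva {v : A} (hv : v * star v * v = v) :
    v * (star v * v) = v := by rw [← mul_assoc]; exact hv

private lemma le_A1 {v u : A} (hv : v * star v * v = v)
    (h : u = v + (1 - v * star v) * u * (1 - star v * v)) :
    u * star v = v * star v := by
  have z1 : (1 - star v * v) * star v = 0 := by
    rw [sub_mul, one_mul, mul_assoc, pi_hsv hv, sub_self]
  calc u * star v = (v + (1 - v * star v) * u * (1 - star v * v)) * star v := by rw [← h]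
    _ = v * star v + (1 - v * star v) * u * ((1 - star v * v) * star v) := by noncomm_ring
    _ = v * star v := by rw [z1, mul_zero, add_zero]

private lemma le_A2 {v u : A} (hv : v * star v * v = v)
    (h : u = v + (1 - v * star v) * u * (1 - star v * v)) :
    star v * u = star v * v := by
  have z2 : star v * (1 - v * star v) = 0 := by
    rw [mul_sub, mul_one, pi_hsv hv, sub_self]
  calc star v * u = star v * (v + (1 - v * star v) * u * (1 - star v * v)) := by rw [← h]
    _ = star v * v + (star v * (1 - v * star v)) * u * (1 - star v * v) := by noncomm_ring
    _ = star v * v := by rw [z2, zero_mul, zero_mul, add_zero]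

private lemma le_A3 {v u : A} (hv : v * star v * v = v)
    (h : u = v + (1 - v * star v) * u * (1 - star v * v)) :
    u * (star v * v) = v := by
  have z3 : (1 - star v * v) * (star v * v) = 0 := by
    rw [sub_mul, one_mul, mul_assoc, pi_hva hv, sub_self]
  calc u * (star v * v) = (v + (1 - v * star v) * u * (1 - star v * v)) * (star v * v) := by
        rw [← h]
    _ = v * (star v * v) + (1 - v * star v) * u * ((1 - star v * v) * (star v * v)) := by
        noncomm_ring
    _ = v := by rw [z3, mul_zero, add_zero, pi_hva hv]

private lemma le_A4 {v u : A} (hv : v * star v * v = v)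
    (h : u = v + (1 - v * star v) * u * (1 - star v * v)) :
    v * star v * u = v := by
  have z4 : (v * star v) * (1 - v * star v) = 0 := by
    rw [mul_sub, mul_one, mul_assoc, pi_hsv hv, sub_self]
  calc v * star v * u = v * star v * (v + (1 - v * star v) * u * (1 - star v * v)) := by
        rw [← h]
    _ = v * star v * v + ((v * star v) * (1 - v * star v)) * u * (1 - star v * v) := by
        noncomm_ring
    _ = v := by rw [z4, zero_mul, zero_mul, add_zero, hv]

private lemma le_A1s {v u : A} (hv : v * star v * v = v)
    (h : u = v + (1 - v * star v) * u * (1 - star v * v)) :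
    v * star u = v * star v := by
  simpa [star_mul] using congrArg star (le_A1 hv h)

private lemma le_A2s {v u : A} (hv : v * star v * v = v)
    (h : u = v + (1 - v * star v) * u * (1 - star v * v)) :
    star u * v = star v * v := by
  simpa [star_mul] using congrArg star (le_A2 hv h)

private lemma le_D {v u : A} (hv : v * star v * v = v)
    (h : u = v + (1 - v * star v) * u * (1 - star v * v)) :
    u * star u * v = v := by
  rw [mul_assoc, le_A2s hv h]
  exact le_A3 hv h

end aux

/-- The relation `v ≤ u ↔ u = v + (1 - v v*) u (1 - v* v)` is a partial order on the
set of partial isometries of a unital C*-algebra, and it reverses the order of the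
associated faces `F_w = {x ∈ B_A : x w* = w w*}`. -/
theorem partial_isometry_order {A : Type*} [CStarAlgebra A]
    (le : A → A → Prop)
    (hle : ∀ v u, le v u ↔ u = v + (1 - v * star v) * u * (1 - star v * v)) :
    (∀ v : A, v * star v * v = v → le v v) ∧
    (∀ v u : A, v * star v * v = v → u * star u * u = u → le v u → le u v → v = u) ∧
    (∀ v u w : A, v * star v * v = v → u * star u * u = u → w * star w * w = w →
      le v u → le u w → le v w) ∧
    (∀ v u : A, v * star v * v = v → u * star u * u = u → le v u →
      {x : A | ‖x‖ ≤ 1 ∧ x * star u = u * star u} ⊆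
        {x : A | ‖x‖ ≤ 1 ∧ x * star v = v * star v}) := by
  refine ⟨?_, ?_, ?_, ?_⟩
  · -- reflexivity
    intro v hv
    rw [hle]
    have z : (1 - v * star v) * v = 0 := by rw [sub_mul, one_mul, hv, sub_self]
    rw [z, zero_mul, add_zero]
  · -- antisymmetry
    intro v u hv hu h1 h2
    rw [hle] at h1 h2
    have E : u * star u = v * star v := (le_A1s hu h2).symm.trans (le_A1 hv h1)
    have z : (1 - v * star v) * u = 0 := by rw [← E, sub_mul, one_mul, hu, sub_self]
    rw [z, zero_mul, add_zero] at h1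
    exact h1.symm
  · -- transitivity
    intro v u w hv hu hw h1 h2
    rw [hle] at h1 h2 ⊢
    -- C1 : w * (v* v) = v
    have C1 : w * (star v * v) = v := by
      calc w * (star v * v) = w * (star u * v) := by rw [le_A2s hv h1]
        _ = w * star u * v := by rw [mul_assoc]
        _ = u * star u * v := by rw [le_A1 hu h2]
        _ = v := le_D hv h1
    -- C2 : (v v*) * w = v
    have C2 : v * star v * w = v := by
      calc v * star v * w = v * star u * w := by rw [le_A1s hv h1]
        _ = v * (star u * w) := by rw [mul_assoc]
        _ = v * (star u * u) := by rw [le_A2 hu h2]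
        _ = v * star u * u := by rw [mul_assoc]
        _ = v * star v * u := by rw [le_A1s hv h1]
        _ = v := le_A4 hv h1
    have expand : v + (1 - v * star v) * w * (1 - star v * v)
        = v + w - (v * star v * w) - w * (star v * v) + (v * star v * w) * (star v * v) := by
      noncomm_ring
    rw [expand, C1, C2, pi_hva hv]
    abel
  · -- face inclusion
    intro v u hv hu h1 x hx
    obtain ⟨hx1, hx2⟩ := hx
    rw [hle] at h1
    refine ⟨hx1, ?_⟩
    have e1 : star v * v * star u = star v := by
      simpa [star_mul, mul_assoc] using congrArg star (le_A3 hv h1)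
    calc x * star v = x * (star v * v * star u) := by rw [e1]
      _ = x * (star u * v * star u) := by rw [le_A2s hv h1]
      _ = (x * star u) * (v * star u) := by noncomm_ring
      _ = (u * star u) * (v * star u) := by rw [hx2]
      _ = (u * star u * v) * star u := by noncomm_ring
      _ = v * star u := by rw [le_D hv h1]
      _ = v * star v := le_A1s hv h1
end

section
/- Let A be a unital C*-algebra, let v be a minimal partial isometry in A (i.e. v v* A v v* = ℂ · v v* and v ≠ 0), and let x ∈ A with ‖x‖ = 1 = ‖v‖ and ‖v − x‖ = 2. Then x = −v + (1 − v v*) x (1 − v* v). -/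
lemma cx_eq_of_abs_le_re {z : ℂ} {M : ℝ} (h1 : ‖z‖ ≤ M) (h2 : M ≤ z.re) : z = M := by
  have h3 : z.re ^ 2 + z.im ^ 2 ≤ M ^ 2 := by
    have := Complex.sq_norm z
    rw [Complex.normSq_apply] at this
    nlinarith [norm_nonneg z]
  have h4 : z.re ≤ ‖z‖ := Complex.re_le_norm z
  have hre : z.re = M := le_antisymm (h4.trans h1) h2
  have h5 : z.im ^ 2 ≤ 0 := by rw [hre] at h3; linarith
  have him : z.im = 0 := by
    have h6 : z.im ^ 2 = 0 := le_antisymm h5 (sq_nonneg z.im)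
    exact pow_eq_zero_iff (n := 2) (by norm_num) |>.mp h6
  exact Complex.ext (by simpa using hre) (by simpa using him)

section state
variable {A : Type*} [CStarAlgebra A] [PartialOrder A] [StarOrderedRing A]

lemma exists_norm_attaining_functional [Nontrivial A] {h : A} (hh : 0 ≤ h) :
    ∃ φ : A →L[ℂ] ℂ, ‖φ‖ = 1 ∧ φ 1 = 1 ∧ φ h = (‖h‖ : ℂ) := by
  have hgn : ‖(1 : A) + h‖ = 1 + ‖h‖ := by
    refine le_antisymm ((norm_add_le _ _).trans (by simp)) ?_
    have h1 : ‖h‖ ∈ spectrum ℝ h := CStarAlgebra.norm_mem_spectrum_of_nonneg hh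
    have h2 : ‖h‖ + 1 ∈ spectrum ℝ (algebraMap ℝ A 1 + h) := spectrum.add_mem_add_iff.mpr h1
    rw [map_one] at h2
    have := spectrum.norm_le_norm_of_mem h2
    rw [Real.norm_eq_abs, abs_of_nonneg (by positivity)] at this
    linarith
  have hg0 : (1 : A) + h ≠ 0 := by
    intro hc
    have h0 : ‖(1:A) + h‖ = 0 := by rw [hc, norm_zero]
    rw [hgn] at h0
    have := norm_nonneg h
    linarith
  obtain ⟨φ, hφ1, hφ2⟩ := exists_dual_vector ℂ ((1 : A) + h) (norm_ne_zero_iff.mpr hg0)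
  rw [map_add, hgn] at hφ2
  have hb1 : ‖φ 1‖ ≤ 1 := by
    have := φ.le_opNorm (1 : A)
    simpa [hφ1] using this
  have hbh : ‖φ h‖ ≤ ‖h‖ := by
    have := φ.le_opNorm h
    simpa [hφ1] using this
  have hre : (φ 1).re + (φ h).re = 1 + ‖h‖ := by
    have := congrArg Complex.re hφ2
    simpa using this
  have hre1 : (1:ℝ) ≤ (φ 1).re := by
    have r2 : (φ h).re ≤ ‖φ h‖ := Complex.re_le_norm _
    linarith
  have hreh : (‖h‖:ℝ) ≤ (φ h).re := by
    have r1 : (φ 1).re ≤ ‖φ 1‖ := Complex.re_le_norm _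
    linarith
  exact ⟨φ, hφ1, cx_eq_of_abs_le_re hb1 hre1, cx_eq_of_abs_le_re hbh hreh⟩

variable [Nontrivial A] (φ : A →L[ℂ] ℂ) (hφn : ‖φ‖ = 1) (hφ1 : φ 1 = 1)

include hφn hφ1 in
lemma im_eq_zero_of_selfAdjoint {a : A} (ha : IsSelfAdjoint a) : (φ a).im = 0 := by
  have key : ∀ t : ℝ, 2 * (φ a).im * t ≤ ‖a‖ ^ 2 := by
    intro t
    set c : ℂ := (t : ℂ) * Complex.I with hc
    set y : A := a + c • 1 with hy
    have hstar : star y = a - c • 1 := by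
      rw [hy, star_add, ha.star_eq, star_smul, star_one]
      have : star c = -c := by
        rw [hc, Complex.star_def, map_mul, Complex.conj_I, Complex.conj_ofReal]
        ring
      rw [this, neg_smul, sub_eq_add_neg]
    have hcc : -(c * c) = ((t^2 : ℝ) : ℂ) := by
      rw [hc]
      have : (t:ℂ) * Complex.I * ((t:ℂ) * Complex.I) = (t:ℂ)^2 * (Complex.I * Complex.I) := by
        ring
      rw [this, Complex.I_mul_I]
      push_cast
      ring
    have hsy : star y * y = a * a + ((t^2 : ℝ) : ℂ) • 1 := by
      have hm : ∀ z : ℂ, z • (1:A) = algebraMap ℂ A z :=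
        fun z => (Algebra.algebraMap_eq_smul_one z).symm
      have hcc' : c * c = -(((t^2 : ℝ)) : ℂ) := by linear_combination -hcc
      rw [hstar, hy, hm, hm]
      have hexp : (a - algebraMap ℂ A c) * (a + algebraMap ℂ A c)
          = a * a + (a * algebraMap ℂ A c - algebraMap ℂ A c * a)
            - algebraMap ℂ A c * algebraMap ℂ A c := by noncomm_ring
      rw [hexp, ← Algebra.commutes c a, sub_self, add_zero, ← map_mul, hcc', map_neg,
        sub_neg_eq_add]
    have hny : ‖y‖^2 ≤ ‖a‖^2 + t^2 := by
      have h1 : ‖y‖^2 = ‖star y * y‖ := by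
        rw [CStarRing.norm_star_mul_self]; ring
      rw [h1, hsy]
      refine (norm_add_le _ _).trans ?_
      have hmm : ‖a * a‖ ≤ ‖a‖ * ‖a‖ := norm_mul_le a a
      have h2 : ‖(((t^2 : ℝ)) : ℂ) • (1:A)‖ = t^2 := by
        rw [norm_smul, norm_one, mul_one, Complex.norm_real, Real.norm_eq_abs,
          abs_of_nonneg (sq_nonneg t)]
      nlinarith
    have hφy : φ y = φ a + c := by
      rw [hy, map_add, map_smul, hφ1, smul_eq_mul, mul_one]
    have habs : ‖φ y‖ ^ 2 ≤ ‖a‖^2 + t^2 := by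
      have h3 : ‖φ y‖ ≤ ‖y‖ := by
        have := φ.le_opNorm y
        simpa [hφn] using this
      nlinarith [norm_nonneg (φ y), norm_nonneg y]
    rw [hφy] at habs
    rw [Complex.sq_norm, Complex.normSq_apply] at habs
    simp only [hc, Complex.add_re, Complex.add_im, Complex.mul_re, Complex.mul_im,
      Complex.I_re, Complex.I_im, Complex.ofReal_re, Complex.ofReal_im] at habs
    nlinarith
  by_contra him
  have hrw : 2 * (φ a).im * ((‖a‖^2 + 1) / (2 * (φ a).im)) = ‖a‖^2 + 1 := by
    field_simp
  have := key ((‖a‖^2 + 1) / (2 * (φ a).im))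
  rw [hrw] at this
  linarith

end state

section state2
variable {A : Type*} [CStarAlgebra A] [PartialOrder A] [StarOrderedRing A] [Nontrivial A]
variable (φ : A →L[ℂ] ℂ) (hφn : ‖φ‖ = 1) (hφ1 : φ 1 = 1)

include hφn hφ1 in
lemma nonneg_of_nonneg (him : ∀ b : A, IsSelfAdjoint b → (φ b).im = 0)
    {a : A} (ha : 0 ≤ a) :
    (φ a).im = 0 ∧ 0 ≤ (φ a).re := by
  have hsa : IsSelfAdjoint a := .of_nonneg ha
  refine ⟨him a hsa, ?_⟩
  set b : A := algebraMap ℝ A ‖a‖ - a with hb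
  have hb0 : 0 ≤ b := by
    rw [hb, sub_nonneg]
    exact (CStarAlgebra.norm_le_iff_le_algebraMap a (norm_nonneg a) ha).mp le_rfl
  have hbn : ‖b‖ ≤ ‖a‖ := by
    refine (CStarAlgebra.norm_le_iff_le_algebraMap b (norm_nonneg a) hb0).mpr ?_
    rw [hb]
    calc algebraMap ℝ A ‖a‖ - a ≤ algebraMap ℝ A ‖a‖ - 0 := sub_le_sub_left ha _
    _ = algebraMap ℝ A ‖a‖ := by rw [sub_zero]
  have hφb : φ b = (‖a‖ : ℂ) - φ a := by
    rw [hb, map_sub]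
    congr 1
    rw [Algebra.algebraMap_eq_smul_one, ← algebraMap_smul ℂ (‖a‖ : ℝ) ((1:A)), map_smul, hφ1]
    simp
  have habs : ‖φ b‖ ≤ ‖a‖ := by
    have h0 := φ.le_opNorm b
    rw [hφn, one_mul] at h0
    calc ‖φ b‖ = ‖φ b‖ := rfl
    _ ≤ ‖b‖ := h0
    _ ≤ ‖a‖ := hbn
  have hre : (φ b).re ≤ ‖φ b‖ := Complex.re_le_norm _
  have hh : (φ b).re = ‖a‖ - (φ a).re := by rw [hφb]; simp
  rw [hh] at hre
  linarith [hre.trans habs]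

include hφn hφ1 in
lemma phi_star_eq_conj (him : ∀ b : A, IsSelfAdjoint b → (φ b).im = 0) (w : A) :
    φ (star w) = (starRingEnd ℂ) (φ w) := by
  set a : A := w + star w with ha
  set b : A := Complex.I • (star w - w) with hbdef
  have hsa : IsSelfAdjoint a := by
    rw [ha, IsSelfAdjoint, star_add, star_star, add_comm]
  have hsb : IsSelfAdjoint b := by
    rw [hbdef, IsSelfAdjoint, star_smul, star_sub, star_star]
    simp only [Complex.star_def, Complex.conj_I, neg_smul, smul_sub, neg_sub]
    abel
  have hA : (φ a).im = 0 := him a hsa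
  have hB : (φ b).im = 0 := him b hsb
  have h1 : φ (star w) + φ w = φ a := by rw [← map_add]; congr 1; rw [ha]; abel
  have hib : w - star w = Complex.I • b := by
    rw [hbdef, smul_smul, Complex.I_mul_I, neg_smul, one_smul, neg_sub]
  have h2 : φ w - φ (star w) = Complex.I * φ b := by
    rw [← map_sub, hib, map_smul, smul_eq_mul]
  have e2 := congrArg Complex.re h2
  simp only [Complex.sub_re, Complex.mul_re, Complex.I_re, Complex.I_im, hB,
    zero_mul, one_mul, mul_zero, zero_sub, mul_one] at e2
  have e1 := congrArg Complex.im h1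
  simp only [Complex.add_im, hA] at e1
  apply Complex.ext
  · simp only [Complex.conj_re]
    linarith
  · simp only [Complex.conj_im]
    linarith

include hφn hφ1 in
lemma abs_sq_le_phi (him : ∀ b : A, IsSelfAdjoint b → (φ b).im = 0) (z : A) :
    ‖φ z‖ ^ 2 ≤ (φ (star z * z)).re := by
  have hpos : ∀ {c : A}, 0 ≤ c → (φ c).im = 0 ∧ 0 ≤ (φ c).re :=
    fun hc => nonneg_of_nonneg φ hφn hφ1 him hc
  by_cases hz : φ z = 0
  · rw [hz]
    simpa using (hpos (star_mul_self_nonneg z)).2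
  set t : ℝ := ‖φ z‖ with htdef
  have ht0 : 0 < t := norm_pos_iff.mpr hz
  obtain ⟨c', hc'⟩ : ∃ c' : ℂ, c' = (starRingEnd ℂ) (φ z) / (t : ℂ) := ⟨_, rfl⟩
  have htC : (t:ℂ) ≠ 0 := by exact_mod_cast ne_of_gt ht0
  have hφu : c' * φ z = (t : ℂ) := by
    rw [hc']
    field_simp
    rw [mul_comm, Complex.mul_conj, Complex.normSq_eq_norm_sq, ← htdef]
    push_cast
    ring
  have hφu' : φ (c' • z) = (t : ℂ) := by rw [map_smul, smul_eq_mul, hφu]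
  have hφsu : φ (star (c' • z)) = (t : ℂ) := by
    rw [phi_star_eq_conj φ hφn hφ1 him, hφu', Complex.conj_ofReal]
  have hc'abs : ‖c'‖ = 1 := by
    rw [hc', norm_div, Complex.norm_conj, Complex.norm_real, Real.norm_eq_abs, abs_of_pos ht0, ← htdef,
      div_self (ne_of_gt ht0)]
  have hc'1 : star c' * c' = 1 := by
    rw [Complex.star_def, mul_comm, Complex.mul_conj, Complex.normSq_eq_norm_sq, hc'abs]
    norm_num
  have huu : star (c' • z) * (c' • z) = star z * z := by
    rw [star_smul, smul_mul_assoc, mul_smul_comm, smul_smul, hc'1, one_smul]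
  have hyy : star ((t:ℂ) • (1:A) - c' • z) * ((t:ℂ) • (1:A) - c' • z)
      = ((t:ℂ) * (t:ℂ)) • (1:A) - (t:ℂ) • (c' • z) - (t:ℂ) • star (c' • z)
        + star (c' • z) * (c' • z) := by
    rw [star_sub, star_smul, star_one, Complex.star_def, Complex.conj_ofReal]
    rw [sub_mul, mul_sub, mul_sub]
    simp only [smul_mul_assoc, mul_smul_comm, smul_smul, one_mul, mul_one]
    module
  have hkey := (hpos (star_mul_self_nonneg ((t:ℂ) • (1:A) - c' • z))).2
  have hφyy : φ (star ((t:ℂ) • (1:A) - c' • z) * ((t:ℂ) • (1:A) - c' • z))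
      = φ (star z * z) - ((t:ℂ) * (t:ℂ)) := by
    rw [hyy]
    simp only [map_sub, map_add, map_smul, smul_eq_mul, hφ1, mul_one, hφsu, huu]
    linear_combination (-(t:ℂ)) * hφu
  rw [hφyy] at hkey
  have hre : (φ (star z * z) - ((t:ℂ) * (t:ℂ))).re = (φ (star z * z)).re - t * t := by
    simp
  rw [hre] at hkey
  nlinarith
end state2


set_option maxHeartbeats 2000000 in
/-- If `v` is a minimal partial isometry in a unital C*-algebra and `x` has norm one
with `‖v - x‖ = 2`, then `x = -v + (1 - v v*) x (1 - v* v)`. -/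
theorem eq_neg_add_peirce0_of_dist_two {A : Type*} [CStarAlgebra A]
    (v x : A) (hv : v * star v * v = v) (hv0 : v ≠ 0)
    (hmin : ∀ a : A, ∃ c : ℂ, (v * star v) * a * (v * star v) = c • (v * star v))
    (hxn : ‖x‖ = 1) (hvn : ‖v‖ = 1) (hdist : ‖v - x‖ = 2) :
    x = -v + (1 - v * star v) * x * (1 - star v * v) := by
  letI : PartialOrder A := CStarAlgebra.spectralOrder A
  haveI : StarOrderedRing A := CStarAlgebra.spectralOrderedRing A
  haveI : Nontrivial A := ⟨⟨v, 0, hv0⟩⟩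
  -- basic identities
  have hv' : star v * v * star v = star v := by
    have h := congrArg star hv
    simpa [star_mul, mul_assoc] using h
  have hp2 : (v * star v) * (v * star v) = v * star v := by
    calc (v * star v) * (v * star v) = (v * star v * v) * star v := by noncomm_ring
    _ = v * star v := by rw [hv]
  have hq2 : (star v * v) * (star v * v) = star v * v := by
    calc (star v * v) * (star v * v) = (star v * v * star v) * v := by noncomm_ring
    _ = star v * v := by rw [hv']
  have hone_q : (1 - star v * v) * (1 - star v * v) = 1 - star v * v := by
    have h1 : (1 - star v * v) * (1 - star v * v)
        = 1 - star v * v - star v * v + (star v * v) * (star v * v) := by noncomm_ring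
    rw [h1, hq2]
    abel
  have hone_p : (1 - v * star v) * (1 - v * star v) = 1 - v * star v := by
    have h1 : (1 - v * star v) * (1 - v * star v)
        = 1 - v * star v - v * star v + (v * star v) * (v * star v) := by noncomm_ring
    rw [h1, hp2]
    abel
  have hpnorm : ‖v * star v‖ = 1 := by rw [CStarRing.norm_self_mul_star, hvn]; norm_num
  have hqnorm : ‖star v * v‖ = 1 := by rw [CStarRing.norm_star_mul_self, hvn]; norm_num
  have hstarp : star (v * star v : A) = v * star v := by rw [star_mul, star_star]
  have hstarq : star (star v * v : A) = star v * v := by rw [star_mul, star_star]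
  -- the scalar lam with  p x v* = lam p
  obtain ⟨lam, hlam0⟩ := hmin (x * star v)
  have hlam : v * star v * x * star v = lam • (v * star v) := by
    calc v * star v * x * star v = v * star v * x * (star v * v * star v) := by rw [hv']
    _ = (v * star v) * (x * star v) * (v * star v) := by noncomm_ring
    _ = lam • (v * star v) := hlam0
  have hvxq : star v * x * (star v * v) = lam • (star v * v) := by
    calc star v * x * (star v * v)
        = (star v * v * star v) * x * (star v * v) := by rw [hv']
    _ = star v * (v * star v * x * star v) * v := by noncomm_ring
    _ = star v * (lam • (v * star v)) * v := by rw [hlam]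
    _ = lam • (star v * (v * star v) * v) := by rw [mul_smul_comm, smul_mul_assoc]
    _ = lam • ((star v * v) * (star v * v)) := by
          congr 1
          noncomm_ring
    _ = lam • (star v * v) := by rw [hq2]
  -- the norm-attaining functional
  have hd : (0:A) ≤ star (v - x) * (v - x) := star_mul_self_nonneg _
  have hdn : ‖star (v - x) * (v - x)‖ = 4 := by
    rw [CStarRing.norm_star_mul_self, hdist]; norm_num
  obtain ⟨φ, hφn, hφ1, hφh⟩ := exists_norm_attaining_functional hd
  rw [hdn] at hφh
  have him : ∀ b : A, IsSelfAdjoint b → (φ b).im = 0 :=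
    fun b hb => im_eq_zero_of_selfAdjoint φ hφn hφ1 hb
  have hpos : ∀ {c : A}, 0 ≤ c → (φ c).im = 0 ∧ 0 ≤ (φ c).re :=
    fun hc => nonneg_of_nonneg φ hφn hφ1 him hc
  have hcs : ∀ z : A, ‖φ z‖ ^ 2 ≤ (φ (star z * z)).re :=
    abs_sq_le_phi φ hφn hφ1 him
  have habs : ∀ b : A, ‖b‖ ≤ 1 → ‖φ b‖ ≤ 1 := by
    intro b hb
    have h0 := φ.le_opNorm b
    rw [hφn, one_mul] at h0
    exact le_trans h0 hb
  -- expand φ of the distance element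
  have hexp : star (v - x) * (v - x)
      = star v * v - star v * x - star x * v + star x * x := by
    rw [star_sub]; noncomm_ring
  rw [hexp, map_add, map_sub, map_sub] at hφh
  have b1 : ‖φ (star v * v)‖ ≤ 1 := habs _ (le_of_eq hqnorm)
  have b2 : ‖φ (star v * x)‖ ≤ 1 := habs _ (by
    calc ‖star v * x‖ ≤ ‖star v‖ * ‖x‖ := norm_mul_le _ _
    _ = 1 := by rw [norm_star, hvn, hxn]; norm_num)
  have b3 : ‖φ (star x * v)‖ ≤ 1 := habs _ (by
    calc ‖star x * v‖ ≤ ‖star x‖ * ‖v‖ := norm_mul_le _ _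
    _ = 1 := by rw [norm_star, hvn, hxn]; norm_num)
  have b4 : ‖φ (star x * x)‖ ≤ 1 := habs _ (by
    calc ‖star x * x‖ ≤ ‖star x‖ * ‖x‖ := norm_mul_le _ _
    _ = 1 := by rw [norm_star, hxn]; norm_num)
  have hre4 := congrArg Complex.re hφh
  simp only [Complex.add_re, Complex.sub_re, Complex.ofReal_re] at hre4
  have r1 := (Complex.abs_re_le_norm (φ (star v * v))).trans b1
  have r2 := (Complex.abs_re_le_norm (φ (star v * x))).trans b2
  have r3 := (Complex.abs_re_le_norm (φ (star x * v))).trans b3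
  have r4 := (Complex.abs_re_le_norm (φ (star x * x))).trans b4
  rw [abs_le] at r1 r2 r3 r4
  have hq1 : φ (star v * v) = 1 := by
    have := cx_eq_of_abs_le_re (M := 1) b1 (by norm_num at hre4 ⊢; linarith [r2.1, r3.1, r4.2])
    simpa using this
  have hvx : φ (star v * x) = -1 := by
    have habs' : ‖-(φ (star v * x))‖ ≤ 1 := by simpa using b2
    have hre' : (1:ℝ) ≤ (-(φ (star v * x))).re := by
      simp only [Complex.neg_re]
      norm_num at hre4
      linarith [r1.2, r3.1, r4.2]
    have := cx_eq_of_abs_le_re (M := 1) habs' hre'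
    have h9 : -(φ (star v * x)) = 1 := by simpa using this
    linear_combination -h9
  -- the functional kills  v* x (1 - v* v)
  have hφe : φ (1 - star v * v) = 0 := by rw [map_sub, hφ1, hq1]; ring
  have hfac : star x * (v * star v) * x
      = star ((v * star v) * x) * ((v * star v) * x) := by
    calc star x * (v * star v) * x
        = star x * ((v * star v) * (v * star v)) * x := by rw [hp2]
    _ = star ((v * star v) * x) * ((v * star v) * x) := by
        simp only [star_mul, star_star]
        noncomm_ring
  have hcle : star x * (v * star v) * x ≤ 1 := by
    have hpos0 : (0:A) ≤ star x * (v * star v) * x := by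
      rw [hfac]; exact star_mul_self_nonneg _
    refine (CStarAlgebra.norm_le_one_iff_of_nonneg _ hpos0).mp ?_
    rw [hfac, CStarRing.norm_star_mul_self]
    have h0 : ‖(v * star v) * x‖ ≤ 1 := by
      calc ‖(v * star v) * x‖ ≤ ‖v * star v‖ * ‖x‖ := norm_mul_le _ _
      _ = 1 := by rw [hpnorm, hxn]; norm_num
    nlinarith [norm_nonneg ((v * star v) * x)]
  have hbb : star (star v * x * (1 - star v * v)) * (star v * x * (1 - star v * v))
      ≤ 1 - star v * v := by
    have h1 : star (star v * x * (1 - star v * v)) * (star v * x * (1 - star v * v))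
        = star (1 - star v * v) * (star x * (v * star v) * x) * (1 - star v * v) := by
      simp only [star_mul, star_sub, star_one, star_star]
      noncomm_ring
    rw [h1]
    calc star (1 - star v * v) * (star x * (v * star v) * x) * (1 - star v * v)
        ≤ star (1 - star v * v) * 1 * (1 - star v * v) := star_left_conjugate_le_conjugate hcle _
    _ = (1 - star v * v) * (1 - star v * v) := by
        rw [star_sub, star_one, hstarq, mul_one]
    _ = 1 - star v * v := hone_q
  have hzero : (φ (star (star v * x * (1 - star v * v)) * (star v * x * (1 - star v * v)))).re
      = 0 := by
    refine le_antisymm ?_ (hpos (star_mul_self_nonneg _)).2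
    have hdiff : (0:A) ≤ (1 - star v * v)
        - star (star v * x * (1 - star v * v)) * (star v * x * (1 - star v * v)) :=
      sub_nonneg.mpr hbb
    have h5 := (hpos hdiff).2
    rw [map_sub, hφe] at h5
    simp only [Complex.sub_re, Complex.zero_re, zero_sub, Complex.neg_re] at h5
    linarith
  have hφb' : φ (star v * x * (1 - star v * v)) = 0 := by
    have hcsb := hcs (star v * x * (1 - star v * v))
    rw [hzero] at hcsb
    have hsq : ‖φ (star v * x * (1 - star v * v))‖ ^ 2 = 0 :=
      le_antisymm hcsb (sq_nonneg _)
    have h0 : ‖φ (star v * x * (1 - star v * v))‖ = 0 :=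
      pow_eq_zero_iff (n := 2) (by norm_num) |>.mp hsq
    exact norm_eq_zero.mp h0
  -- lam = -1
  have hlamval : lam = -1 := by
    have hsplit : star v * x
        = star v * x * (star v * v) + star v * x * (1 - star v * v) := by noncomm_ring
    have h1 := congrArg φ hsplit
    rw [map_add, hφb', add_zero, hvx, hvxq, map_smul, smul_eq_mul, hq1, mul_one] at h1
    linear_combination -h1
  have hpxq : v * star v * x * (star v * v) = -v := by
    calc v * star v * x * (star v * v) = (v * star v * x * star v) * v := by noncomm_ring
    _ = (lam • (v * star v)) * v := by rw [hlam]
    _ = lam • (v * star v * v) := by rw [smul_mul_assoc]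
    _ = -v := by rw [hv, hlamval, neg_smul, one_smul]
  have hpne : (v * star v : A) ≠ 0 := by
    intro h0
    apply hv0
    calc v = v * star v * v := hv.symm
    _ = 0 := by rw [h0, zero_mul]
  have hqne : (star v * v : A) ≠ 0 := by
    intro h0
    apply hv0
    have h1 : v * (star v * v) = v := by rw [← mul_assoc, hv]
    calc v = v * (star v * v) := h1.symm
    _ = 0 := by rw [h0, mul_zero]
  have hppos : (0:A) ≤ v * star v := by
    have h0 : (v * star v : A) = star (star v) * star v := by rw [star_star]
    rw [h0]; exact star_mul_self_nonneg _
  have hqpos : (0:A) ≤ star v * v := star_mul_self_nonneg v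
  -- x₁ := v v* x (1 - v* v)  is zero
  obtain ⟨mu, hmu0⟩ := hmin (x * ((1 - star v * v) * star x))
  have hx1x1 : (v * star v * x * (1 - star v * v)) * star (v * star v * x * (1 - star v * v))
      = mu • (v * star v) := by
    have h1 : (v * star v * x * (1 - star v * v)) * star (v * star v * x * (1 - star v * v))
        = (v * star v) * (x * (((1 - star v * v) * (1 - star v * v)) * star x)) * (v * star v) := by
      simp only [star_mul, star_sub, star_one, star_star]
      noncomm_ring
    rw [h1, hone_q]
    exact hmu0
  have hmureal : mu = ((mu.re : ℝ) : ℂ) := by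
    have h2 := congrArg star hx1x1
    rw [star_mul, star_star, hx1x1, star_smul, hstarp] at h2
    rcases smul_eq_zero.mp (show (star mu - mu) • (v * star v : A) = 0 by
        rw [sub_smul, h2.symm]; abel) with h | h
    · have h3 : star mu = mu := by
        have := sub_eq_zero.mp h
        exact this
      rw [Complex.star_def] at h3
      exact (Complex.conj_eq_iff_re.mp h3).symm
    · exact absurd h hpne
  obtain ⟨ps, hpsn, hps1, hpsp⟩ := exists_norm_attaining_functional hppos
  rw [hpnorm] at hpsp
  have hpspos : ∀ {c : A}, 0 ≤ c → (ps c).im = 0 ∧ 0 ≤ (ps c).re :=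
    fun hc => nonneg_of_nonneg ps hpsn hps1
      (fun b hb => im_eq_zero_of_selfAdjoint ps hpsn hps1 hb) hc
  have hmure : 0 ≤ mu.re := by
    have h1 := (hpspos (mul_star_self_nonneg (v * star v * x * (1 - star v * v)))).2
    rw [hx1x1, map_smul, hpsp, smul_eq_mul, Complex.ofReal_one, mul_one] at h1
    exact h1
  have hx1v : (v * star v * x * (1 - star v * v)) * star v = 0 := by
    calc (v * star v * x * (1 - star v * v)) * star v
        = v * star v * x * (star v - star v * v * star v) := by noncomm_ring
    _ = 0 := by rw [hv']; simp
  have hvx1 : v * star (v * star v * x * (1 - star v * v)) = 0 := by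
    have h0 := congrArg star hx1v
    rw [star_mul, star_star, star_zero] at h0
    exact h0
  have habs1mu : ‖1 + mu‖ ≤ 1 := by
    have hsplit2 : v * star v * x = -v + v * star v * x * (1 - star v * v) := by
      have h0 : v * star v * x
          = v * star v * x * (star v * v) + v * star v * x * (1 - star v * v) := by noncomm_ring
      rw [hpxq] at h0
      exact h0
    have hdecomp : (v * star v * x) * star (v * star v * x) = (1 + mu) • (v * star v) := by
      conv_lhs => rw [hsplit2]
      rw [star_add, star_neg]
      have hexp2 : (-v + v * star v * x * (1 - star v * v))
            * (-star v + star (v * star v * x * (1 - star v * v)))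
          = v * star v - v * star (v * star v * x * (1 - star v * v))
            - (v * star v * x * (1 - star v * v)) * star v
            + (v * star v * x * (1 - star v * v))
              * star (v * star v * x * (1 - star v * v)) := by
        noncomm_ring
      rw [hexp2, hx1v, hvx1, hx1x1, sub_zero, sub_zero, add_smul, one_smul]
    have hnn : ‖(v * star v * x) * star (v * star v * x)‖ ≤ 1 := by
      rw [CStarRing.norm_self_mul_star]
      have h0 : ‖v * star v * x‖ ≤ 1 := by
        calc ‖v * star v * x‖ ≤ ‖v * star v‖ * ‖x‖ := norm_mul_le _ _
        _ = 1 := by rw [hpnorm, hxn]; norm_num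
      nlinarith [norm_nonneg (v * star v * x)]
    rw [hdecomp, norm_smul, hpnorm, mul_one] at hnn
    exact hnn
  have hmuzero : mu = 0 := by
    have h0 : ‖1 + ((mu.re : ℝ) : ℂ)‖ = |1 + mu.re| := by
      rw [← Complex.ofReal_one, ← Complex.ofReal_add, Complex.norm_real, Real.norm_eq_abs]
    rw [hmureal, h0] at habs1mu
    have h1 : mu.re = 0 := by
      rcases abs_le.mp habs1mu with ⟨hl, hr⟩
      linarith
    rw [hmureal, h1]
    simp
  have hx1zero : v * star v * x * (1 - star v * v) = 0 := by
    have h1 : (v * star v * x * (1 - star v * v))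
        * star (v * star v * x * (1 - star v * v)) = 0 := by
      rw [hx1x1, hmuzero, zero_smul]
    have h2 : ‖v * star v * x * (1 - star v * v)‖ * ‖v * star v * x * (1 - star v * v)‖ = 0 := by
      rw [← CStarRing.norm_self_mul_star, h1, norm_zero]
    have h3 : ‖v * star v * x * (1 - star v * v)‖ = 0 := mul_self_eq_zero.mp h2
    exact norm_eq_zero.mp h3
  -- x₂ := (1 - v v*) x (v* v) is zero
  obtain ⟨nu, hnu0⟩ := hmin (v * (star x * ((1 - v * star v) * x)) * star v)
  have hstep : v * (star x * ((1 - v * star v) * x)) * star v = nu • (v * star v) := by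
    calc v * (star x * ((1 - v * star v) * x)) * star v
        = (v * star v * v) * (star x * ((1 - v * star v) * x)) * (star v * v * star v) := by
          rw [hv, hv']
    _ = (v * star v) * (v * (star x * ((1 - v * star v) * x)) * star v) * (v * star v) := by
          noncomm_ring
    _ = nu • (v * star v) := hnu0
  have hnu : (star v * v) * (star x * ((1 - v * star v) * x)) * (star v * v)
      = nu • (star v * v) := by
    calc (star v * v) * (star x * ((1 - v * star v) * x)) * (star v * v)
        = star v * (v * (star x * ((1 - v * star v) * x)) * star v) * v := by noncomm_ring
    _ = star v * (nu • (v * star v)) * v := by rw [hstep]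
    _ = nu • (star v * (v * star v) * v) := by rw [mul_smul_comm, smul_mul_assoc]
    _ = nu • ((star v * v) * (star v * v)) := by
          congr 1
          noncomm_ring
    _ = nu • (star v * v) := by rw [hq2]
  have hx2x2 : star ((1 - v * star v) * x * (star v * v)) * ((1 - v * star v) * x * (star v * v))
      = nu • (star v * v) := by
    have h1 : star ((1 - v * star v) * x * (star v * v)) * ((1 - v * star v) * x * (star v * v))
        = (star v * v) * (star x * (((1 - v * star v) * (1 - v * star v)) * x)) * (star v * v) := by
      simp only [star_mul, star_sub, star_one, star_star]
      noncomm_ring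
    rw [h1, hone_p]
    exact hnu
  have hnureal : nu = ((nu.re : ℝ) : ℂ) := by
    have h2 := congrArg star hx2x2
    rw [star_mul, star_star, hx2x2, star_smul, hstarq] at h2
    rcases smul_eq_zero.mp (show (star nu - nu) • (star v * v : A) = 0 by
        rw [sub_smul, h2.symm]; abel) with h | h
    · have h3 : star nu = nu := sub_eq_zero.mp h
      rw [Complex.star_def] at h3
      exact (Complex.conj_eq_iff_re.mp h3).symm
    · exact absurd h hqne
  obtain ⟨ps2, hps2n, hps21, hps2q⟩ := exists_norm_attaining_functional hqpos
  rw [hqnorm] at hps2q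
  have hps2pos : ∀ {c : A}, 0 ≤ c → (ps2 c).im = 0 ∧ 0 ≤ (ps2 c).re :=
    fun hc => nonneg_of_nonneg ps2 hps2n hps21
      (fun b hb => im_eq_zero_of_selfAdjoint ps2 hps2n hps21 hb) hc
  have hnure : 0 ≤ nu.re := by
    have h1 := (hps2pos (star_mul_self_nonneg ((1 - v * star v) * x * (star v * v)))).2
    rw [hx2x2, map_smul, hps2q, smul_eq_mul, Complex.ofReal_one, mul_one] at h1
    exact h1
  have hsvx2 : star v * ((1 - v * star v) * x * (star v * v)) = 0 := by
    calc star v * ((1 - v * star v) * x * (star v * v))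
        = (star v - star v * v * star v) * (x * (star v * v)) := by noncomm_ring
    _ = 0 := by rw [hv']; simp
  have hx2sv : star ((1 - v * star v) * x * (star v * v)) * v = 0 := by
    have h0 := congrArg star hsvx2
    rw [star_mul, star_star, star_zero] at h0
    exact h0
  have habs1nu : ‖1 + nu‖ ≤ 1 := by
    have hsplit2 : x * (star v * v) = -v + (1 - v * star v) * x * (star v * v) := by
      have h0 : x * (star v * v)
          = v * star v * x * (star v * v) + (1 - v * star v) * x * (star v * v) := by noncomm_ring
      rw [hpxq] at h0
      exact h0
    have hdecomp : star (x * (star v * v)) * (x * (star v * v)) = (1 + nu) • (star v * v) := by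
      conv_lhs => rw [hsplit2]
      rw [star_add, star_neg]
      have hexp2 : (-star v + star ((1 - v * star v) * x * (star v * v)))
            * (-v + (1 - v * star v) * x * (star v * v))
          = star v * v - star v * ((1 - v * star v) * x * (star v * v))
            - star ((1 - v * star v) * x * (star v * v)) * v
            + star ((1 - v * star v) * x * (star v * v))
              * ((1 - v * star v) * x * (star v * v)) := by
        noncomm_ring
      rw [hexp2, hsvx2, hx2sv, hx2x2, sub_zero, sub_zero, add_smul, one_smul]
    have hnn : ‖star (x * (star v * v)) * (x * (star v * v))‖ ≤ 1 := by
      rw [CStarRing.norm_star_mul_self]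
      have h0 : ‖x * (star v * v)‖ ≤ 1 := by
        calc ‖x * (star v * v)‖ ≤ ‖x‖ * ‖star v * v‖ := norm_mul_le _ _
        _ = 1 := by rw [hqnorm, hxn]; norm_num
      nlinarith [norm_nonneg (x * (star v * v))]
    rw [hdecomp, norm_smul, hqnorm, mul_one] at hnn
    exact hnn
  have hnuzero : nu = 0 := by
    have h0 : ‖1 + ((nu.re : ℝ) : ℂ)‖ = |1 + nu.re| := by
      rw [← Complex.ofReal_one, ← Complex.ofReal_add, Complex.norm_real, Real.norm_eq_abs]
    rw [hnureal, h0] at habs1nu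
    have h1 : nu.re = 0 := by
      rcases abs_le.mp habs1nu with ⟨hl, hr⟩
      linarith
    rw [hnureal, h1]
    simp
  have hx2zero : (1 - v * star v) * x * (star v * v) = 0 := by
    have h1 : star ((1 - v * star v) * x * (star v * v))
        * ((1 - v * star v) * x * (star v * v)) = 0 := by
      rw [hx2x2, hnuzero, zero_smul]
    have h2 : ‖(1 - v * star v) * x * (star v * v)‖ * ‖(1 - v * star v) * x * (star v * v)‖ = 0 := by
      rw [← CStarRing.norm_star_mul_self, h1, norm_zero]
    have h3 : ‖(1 - v * star v) * x * (star v * v)‖ = 0 := mul_self_eq_zero.mp h2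
    exact norm_eq_zero.mp h3
  -- assemble
  have hpx : v * star v * x = -v := by
    have h1 : v * star v * x
        = v * star v * x * (star v * v) + v * star v * x * (1 - star v * v) := by noncomm_ring
    rw [hpxq, hx1zero, add_zero] at h1
    exact h1
  have hxq : x * (star v * v) = -v := by
    have h1 : x * (star v * v)
        = v * star v * x * (star v * v) + (1 - v * star v) * x * (star v * v) := by noncomm_ring
    rw [hpxq, hx2zero, add_zero] at h1
    exact h1
  have hrhs : (1 - v * star v) * x * (1 - star v * v)
      = x - v * star v * x - x * (star v * v) + v * star v * x * (star v * v) := by noncomm_ring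
  rw [hrhs, hpxq, hpx, hxq]
  abel
end
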